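/- Let Γ be a perfect group generated by a finite set S = S⁻¹, and let τ_{S̄}(g) = lim_{n→∞} |gⁿ|_{S̄}/n denote the translation length of the bi-invariant word norm. Then there is a constant ν > 0 such that scl(g) ≤ ν·τ_{S̄}(g) for every g ∈ Γ, where scl(g) = lim_{n→∞} cl(gⁿ)/n is the stable commutator length. -/

import Mathlib

/-- The set of all conjugates of elements of `S`. -/
def conjSet {G : Type*} [Group G] (S : Set G) : Set G :=
  {x | ∃ g : G, ∃ s ∈ S, x = g * s * g⁻¹}

/-- The word norm of `g` with respect to a generating set `T`:
the least length of a word in elements of `T` expressing `g`. -/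
noncomputable def wordNorm {G : Type*} [Group G] (T : Set G) (g : G) : ℕ :=
  sInf {k | ∃ l : List G, (∀ x ∈ l, x ∈ T) ∧ l.prod = g ∧ l.length = k}

private lemma conj_list_prod {G : Type*} [Group G] (g : G) (m : List G) :
    (m.map (fun c => g * c * g⁻¹)).prod = g * m.prod * g⁻¹ := by
  induction m with
  | nil => simp
  | cons a t ih => simp only [List.map_cons, List.prod_cons, ih]; group

/-- On a perfect group generated by a finite symmetric set S, the stable
commutator length scl(g) = lim cl(gⁿ)/n is bounded by a multiple of the
translation length τ_{S̄}(g) = lim |gⁿ|_{S̄}/n of the bi-invariant word norm. -/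
theorem scl_le_translation_length {Γ : Type*} [Group Γ]
    (S : Set Γ) (hfin : S.Finite) (hinv : S⁻¹ = S)
    (hgen : Subgroup.closure S = ⊤)
    (hperf : commutator Γ = ⊤) :
    ∃ ν : ℝ, 0 < ν ∧ ∀ g : Γ, ∀ sclg τg : ℝ,
      Filter.Tendsto (fun n : ℕ => (wordNorm (commutatorSet Γ) (g ^ n) : ℝ) / n)
        Filter.atTop (nhds sclg) →
      Filter.Tendsto (fun n : ℕ => (wordNorm (conjSet S) (g ^ n) : ℝ) / n)
        Filter.atTop (nhds τg) →
      sclg ≤ ν * τg := by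
  classical
  -- commutatorSet is closed under inverses
  have hinvc : ∀ x ∈ commutatorSet Γ, x⁻¹ ∈ commutatorSet Γ := by
    rintro x ⟨a, b, rfl⟩
    exact ⟨b, a, (commutatorElement_inv a b).symm⟩
  -- every element of Γ is a product of commutators
  have hcomm : ∀ x : Γ, ∃ l : List Γ, (∀ y ∈ l, y ∈ commutatorSet Γ) ∧ l.prod = x := by
    intro x
    have hx : x ∈ Subgroup.closure (commutatorSet Γ) := by
      rw [← commutator_eq_closure, hperf]; trivial
    have hx' : x ∈ Submonoid.closure (commutatorSet Γ ∪ (commutatorSet Γ)⁻¹) := by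
      rw [← Subgroup.closure_toSubmonoid]; exact hx
    obtain ⟨l, hl, hlp⟩ := Submonoid.exists_list_of_mem_closure hx'
    refine ⟨l, fun y hy => ?_, hlp⟩
    rcases hl y hy with h | h
    · exact h
    · have := hinvc _ h
      rwa [inv_inv] at this
  choose F hFmem hFprod using hcomm
  set C : ℕ := hfin.toFinset.sup (fun s => (F s).length) + 1 with hC
  have hFC : ∀ s ∈ S, (F s).length ≤ C := by
    intro s hs
    calc (F s).length ≤ hfin.toFinset.sup (fun s => (F s).length) :=
          Finset.le_sup (f := fun s => (F s).length) (hfin.mem_toFinset.2 hs)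
      _ ≤ C := Nat.le_succ _
  -- replace a word in conjugates of S by a word in commutators
  have key : ∀ l : List Γ, (∀ x ∈ l, x ∈ conjSet S) →
      ∃ L : List Γ, (∀ y ∈ L, y ∈ commutatorSet Γ) ∧ L.prod = l.prod ∧
        L.length ≤ C * l.length := by
    intro l
    induction l with
    | nil => exact fun _ => ⟨[], by simp, by simp, by simp⟩
    | cons x t ih =>
      intro h
      obtain ⟨L, hL, hLp, hLl⟩ := ih (fun y hy => h y (List.mem_cons_of_mem _ hy))
      obtain ⟨g, s, hs, rfl⟩ := h x List.mem_cons_self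
      refine ⟨((F s).map (fun c => g * c * g⁻¹)) ++ L, ?_, ?_, ?_⟩
      · intro y hy
        rcases List.mem_append.1 hy with hy | hy
        · obtain ⟨c, hc, rfl⟩ := List.mem_map.1 hy
          obtain ⟨a, b, rfl⟩ := hFmem s c hc
          exact ⟨g * a * g⁻¹, g * b * g⁻¹, (conjugate_commutatorElement a b g).symm⟩
        · exact hL y hy
      · rw [List.prod_append, conj_list_prod, hFprod s, hLp, List.prod_cons]
      · rw [List.length_append, List.length_map, List.length_cons, Nat.mul_succ]
        exact (Nat.add_le_add (hFC s hs) hLl).trans_eq (Nat.add_comm _ _)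
  -- the pointwise bound between the two word norms
  have bound : ∀ h : Γ, wordNorm (commutatorSet Γ) h ≤ C * wordNorm (conjSet S) h := by
    intro h
    have hne : {k | ∃ l : List Γ, (∀ x ∈ l, x ∈ conjSet S) ∧ l.prod = h ∧
        l.length = k}.Nonempty := by
      have hx : h ∈ Subgroup.closure S := by rw [hgen]; trivial
      have hx' : h ∈ Submonoid.closure (S ∪ S⁻¹) := by
        rw [← Subgroup.closure_toSubmonoid]; exact hx
      rw [hinv, Set.union_self] at hx'
      obtain ⟨l, hl, hlp⟩ := Submonoid.exists_list_of_mem_closure hx'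
      exact ⟨l.length, l, fun x hx => ⟨1, x, hl x hx, by group⟩, hlp, rfl⟩
    obtain ⟨l, hl, hlp, hll⟩ := Nat.sInf_mem hne
    obtain ⟨L, hL, hLp, hLl⟩ := key l hl
    calc wordNorm (commutatorSet Γ) h ≤ L.length :=
          Nat.sInf_le ⟨L, hL, by rw [hLp, hlp], rfl⟩
      _ ≤ C * l.length := hLl
      _ = C * wordNorm (conjSet S) h := by rw [wordNorm, hll]
  refine ⟨(C : ℝ), by positivity, fun g sclg τg h1 h2 => ?_⟩
  have h2' : Filter.Tendsto (fun n : ℕ => (C : ℝ) * ((wordNorm (conjSet S) (g ^ n) : ℝ) / n))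
      Filter.atTop (nhds ((C : ℝ) * τg)) := h2.const_mul _
  refine le_of_tendsto_of_tendsto' h1 h2' fun n => ?_
  rcases Nat.eq_zero_or_pos n with rfl | hn
  · simp
  · rw [mul_div_assoc']
    exact (div_le_div_iff_of_pos_right (c := (n : ℝ)) (by exact_mod_cast hn)).2
      (by exact_mod_cast bound (g ^ n))
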